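/- arXiv:1803.00478 — 5 statements merged into one kernel-verified Lean document; each statement's English description precedes it below -/
import Mathlib

section
/- Let R be an integral domain of characteristic zero and let R^bin be its binomial closure inside L. Then R^bin is a binomial ring containing ι(R): R^bin is an integral domain of characteristic zero, and for every λ ∈ R^bin and every n ∈ ℕ there exists y ∈ R^bin with n!·y = λ(λ−1)(λ−2)⋯(λ−n+1). -/
/-- The multiplicative set of nonzero elements of the image of `ℤ` in `R`. -/
def intNonzero (R : Type*) [CommRing R] [IsDomain R] : Submonoid R where
  carrier := {r : R | (∃ m : ℤ, (m : R) = r) ∧ r ≠ 0}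
  one_mem' := ⟨⟨1, by simp⟩, one_ne_zero⟩
  mul_mem' := by
    rintro a b ⟨⟨m, hm⟩, ha⟩ ⟨⟨k, hk⟩, hb⟩
    exact ⟨⟨m * k, by push_cast; rw [hm, hk]⟩, mul_ne_zero ha hb⟩

/-- The binomial coefficient `C_x^n = x (x-1) ⋯ (x-n+1) / n!` in a commutative ring `L`
(where `n!` is invertible; `Ring.inverse` returns the inverse of a unit). -/
noncomputable def binom {L : Type*} [CommRing L] (x : L) (n : ℕ) : L :=
  (∏ i ∈ Finset.range n, (x - (i : L))) * Ring.inverse (n.factorial : L)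

/-- A subring `B` of `L` is binomially closed if it contains all binomial
coefficients `C_x^n` for `x ∈ B`, `n : ℕ`. -/
def BinClosed {L : Type*} [CommRing L] (B : Subring L) : Prop :=
  ∀ x ∈ B, ∀ n : ℕ, binom x n ∈ B

/-- The binomial closure of `R`: the smallest binomially closed subring of the
localization `L` of `R` at the nonzero integers containing the image of `R`. -/
noncomputable def binClosure (R : Type*) [CommRing R] [IsDomain R] [CharZero R] :
    Subring (Localization (intNonzero R)) :=
  sInf {B | BinClosed B ∧ (algebraMap R (Localization (intNonzero R))).range ≤ B}

/-- The canonical injection `ι : R → R^bin`. -/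
noncomputable def iotaBin (R : Type*) [CommRing R] [IsDomain R] [CharZero R] :
    R →+* binClosure R :=
  (algebraMap R (Localization (intNonzero R))).codRestrict (binClosure R)
    (fun r => Subring.mem_sInf.mpr fun _ hB => hB.2 ⟨r, rfl⟩)

/-- A binomial ring: an integral domain of characteristic zero in which each
`x (x-1) ⋯ (x-n+1)` is divisible by `n!`. (The domain and characteristic-zero
assumptions are carried as instance hypotheses where used.) -/
def IsBinomialRing (S : Type*) [CommRing S] : Prop :=
  ∀ (x : S) (n : ℕ), ∃ y : S, (n.factorial : S) * y = ∏ i ∈ Finset.range n, (x - (i : S))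

/-- the binomial closure `R^bin` is a binomial ring containing `ι(R)`:
it is an integral domain of characteristic zero, it contains the image of `R`, and for every
`x ∈ R^bin` and `n : ℕ` there is `y ∈ R^bin` with `n! * y = x (x-1) ⋯ (x-n+1)`. -/
theorem binClosure_isBinomialRing (R : Type*) [CommRing R] [IsDomain R] [CharZero R] :
    IsDomain (binClosure R) ∧ CharZero (binClosure R) ∧
      (algebraMap R (Localization (intNonzero R))).range ≤ binClosure R ∧
      ∀ x ∈ binClosure R, ∀ n : ℕ,
        ∃ y ∈ binClosure R,
          (n.factorial : Localization (intNonzero R)) * y =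
            ∏ i ∈ Finset.range n, (x - (i : Localization (intNonzero R))) := by

  have hle : intNonzero R ≤ nonZeroDivisors R := fun r hr =>
    mem_nonZeroDivisors_of_ne_zero hr.2
  haveI hdom : IsDomain (Localization (intNonzero R)) :=
    IsLocalization.isDomain_localization hle
  have hinj : Function.Injective (algebraMap R (Localization (intNonzero R))) :=
    IsLocalization.injective _ hle
  haveI hchar : CharZero (Localization (intNonzero R)) := by
    refine ⟨fun a b h => ?_⟩
    rw [← map_natCast (algebraMap R (Localization (intNonzero R))),
        ← map_natCast (algebraMap R (Localization (intNonzero R)))] at h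
    exact Nat.cast_injective (hinj h)
  refine ⟨inferInstance, inferInstance, le_sInf fun B hB => hB.2, ?_⟩
  intro x hx n
  refine ⟨binom x n, Subring.mem_sInf.mpr fun B hB =>
    hB.1 x (Subring.mem_sInf.mp hx B hB) n, ?_⟩
  have hu : IsUnit ((n.factorial : ℕ) : Localization (intNonzero R)) := by
    have := IsLocalization.map_units (Localization (intNonzero R))
      (⟨((n.factorial : ℕ) : R), ⟨n.factorial, by push_cast; ring⟩,
        Nat.cast_ne_zero.mpr n.factorial_ne_zero⟩ : intNonzero R)
    simpa using this
  unfold binom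
  rw [mul_comm, mul_assoc, Ring.inverse_mul_cancel _ hu, mul_one]
end

section
/- Let R be an integral domain of characteristic zero with binomial closure R^bin and canonical injection ι : R → R^bin, and let S be a binomial ring. Then for every ring homomorphism φ : R → S there exists a ring homomorphism φ' : R^bin → S with φ' ∘ ι = φ. -/

lemma map_ring_inverse {A B : Type*} [CommRing A] [CommRing B] (f : A →+* B) {a : A}
    (h : IsUnit a) : f (Ring.inverse a) = Ring.inverse (f a) := by
  have hb : IsUnit (f a) := h.map f
  calc f (Ring.inverse a) = (Ring.inverse (f a) * f a) * f (Ring.inverse a) := by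
        rw [Ring.inverse_mul_cancel _ hb, one_mul]
    _ = Ring.inverse (f a) * f (a * Ring.inverse a) := by rw [map_mul]; ring
    _ = Ring.inverse (f a) := by rw [Ring.mul_inverse_cancel _ h, map_one, mul_one]

lemma map_binom {A B : Type*} [CommRing A] [CommRing B] (f : A →+* B) (x : A) (n : ℕ)
    (h : IsUnit ((n.factorial : ℕ) : A)) : f (binom x n) = binom (f x) n := by
  unfold binom
  rw [map_mul, map_prod, map_ring_inverse f h, map_natCast]
  congr 1
  exact Finset.prod_congr rfl fun i _ => by rw [map_sub, map_natCast]

lemma factorial_unit_loc (R : Type*) [CommRing R] [IsDomain R] [CharZero R] (n : ℕ) :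
    IsUnit ((n.factorial : ℕ) : Localization (intNonzero R)) := by
  have hmem : ((n.factorial : R)) ∈ intNonzero R :=
    ⟨⟨(n.factorial : ℤ), by push_cast; ring⟩, by
      exact_mod_cast (Nat.cast_ne_zero (R := R)).mpr n.factorial_ne_zero⟩
  have := IsLocalization.map_units (M := intNonzero R)
    (Localization (intNonzero R)) ⟨_, hmem⟩
  simpa using this

/-- for any binomial ring `S` and any ring homomorphism `φ : R → S`,
there exists a ring homomorphism `φ' : R^bin → S` with `φ' ∘ ι = φ`. -/
theorem binClosure_hom_extension (R S : Type*) [CommRing R] [IsDomain R] [CharZero R]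
    [CommRing S] [IsDomain S] [CharZero S] (hS : IsBinomialRing S) (φ : R →+* S) :
    ∃ φ' : binClosure R →+* S, φ'.comp (iotaBin R) = φ := by
  classical
  set L := Localization (intNonzero R)
  set LS := Localization (intNonzero S)
  have hmono : intNonzero R ≤ (intNonzero S).comap φ := by
    rintro r ⟨⟨m, hm⟩, hr⟩
    have hm0 : m ≠ 0 := by rintro rfl; simp at hm; exact hr hm.symm
    refine ⟨⟨m, by rw [← hm, map_intCast]⟩, ?_⟩
    show φ r ≠ 0
    rw [← hm, map_intCast]
    exact Int.cast_ne_zero.mpr hm0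
  let ψ : L →+* LS := IsLocalization.map LS φ hmono
  have hψι : ∀ r : R, ψ (algebraMap R L r) = algebraMap S LS (φ r) := fun r =>
    IsLocalization.map_eq (S := L) (Q := LS) hmono r
  have hinj : Function.Injective (algebraMap S LS) := by
    apply IsLocalization.injective (M := intNonzero S) LS
    intro s hs
    exact mem_nonZeroDivisors_of_ne_zero hs.2
  -- the preimage of the image of S is binomially closed and contains the image of R
  let B : Subring L := ((algebraMap S LS).range.comap ψ)
  have hBclosed : BinClosed B := by
    intro x hx n
    rw [Subring.mem_comap] at hx ⊢
    obtain ⟨s, hs⟩ := hx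
    show ψ (binom x n) ∈ (algebraMap S LS).range
    rw [map_binom ψ x n (factorial_unit_loc R n), ← hs]
    obtain ⟨y, hy⟩ := hS s n
    refine ⟨y, ?_⟩
    have hu : IsUnit ((n.factorial : ℕ) : LS) := factorial_unit_loc S n
    unfold binom
    have hprod : (∏ i ∈ Finset.range n, (algebraMap S LS s - (i : LS)))
        = algebraMap S LS (∏ i ∈ Finset.range n, (s - (i : S))) := by
      rw [map_prod]
      exact Finset.prod_congr rfl fun i _ => by rw [map_sub, map_natCast]
    rw [hprod, ← hy, map_mul, map_natCast, mul_comm ((n.factorial : ℕ) : LS), mul_assoc,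
      Ring.mul_inverse_cancel _ hu, mul_one]
  have hBrange : (algebraMap R L).range ≤ B := by
    rintro _ ⟨r, rfl⟩
    exact ⟨φ r, (hψι r).symm⟩
  have hle : binClosure R ≤ B := sInf_le ⟨hBclosed, hBrange⟩
  let e : S ≃+* (algebraMap S LS).range := RingEquiv.ofBijective
    ((algebraMap S LS).rangeRestrict)
    ⟨fun a b h => hinj (congrArg Subtype.val h), (algebraMap S LS).rangeRestrict_surjective⟩
  let ψ' : binClosure R →+* (algebraMap S LS).range :=
    (ψ.comp (binClosure R).subtype).codRestrict _ (fun x => hle x.2)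
  refine ⟨e.symm.toRingHom.comp ψ', ?_⟩
  ext r
  have : ψ' (iotaBin R r) = e (φ r) := by
    apply Subtype.ext
    exact hψι r
  simp only [RingHom.comp_apply, RingEquiv.toRingHom_eq_coe, RingHom.coe_coe, this]
  exact e.symm_apply_apply (φ r)
end

section
/- Let R be an integral domain of characteristic zero with binomial closure R^bin and canonical injection ι : R → R^bin, let S be a binomial ring, let φ : R → S be a ring homomorphism, and let φ' : R^bin → S be a ring homomorphism with φ' ∘ ι = φ. If φ is injective, then φ' is injective. -/
set_option synthInstance.maxHeartbeats 400000 in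
/-- if `φ : R → S` is injective, then so is its extension
`φ' : R^bin → S` to the binomial closure. -/
theorem binClosure_hom_extension_injective (R S : Type*) [CommRing R] [IsDomain R] [CharZero R]
    [CommRing S] [IsDomain S] [CharZero S] (hS : IsBinomialRing S) (φ : R →+* S)
    (φ' : binClosure R →+* S) (h : φ'.comp (iotaBin R) = φ)
    (hinj : Function.Injective φ) :
    Function.Injective φ' := by
  have hle : intNonzero R ≤ nonZeroDivisors R := fun s hs =>
    mem_nonZeroDivisors_of_ne_zero hs.2
  haveI : IsDomain (Localization (intNonzero R)) := IsLocalization.isDomain_localization hle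
  rw [injective_iff_map_eq_zero]
  intro x hx
  obtain ⟨⟨r, s⟩, hs⟩ := IsLocalization.surj (intNonzero R)
    (x : Localization (intNonzero R))
  have hι : x * iotaBin R (s : R) = iotaBin R r := by
    apply Subtype.ext
    exact hs
  have h2 := congrArg φ' hι
  rw [map_mul, hx, zero_mul] at h2
  have hφr : φ r = 0 := by
    have h3 : φ' (iotaBin R r) = φ r := DFunLike.congr_fun h r
    rw [← h3, ← h2]
  have hr : r = 0 := hinj (by simpa using hφr)
  subst hr
  have hsne : algebraMap R (Localization (intNonzero R)) (s : R) ≠ 0 :=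
    fun h0 => s.2.2 (IsLocalization.injective (Localization (intNonzero R)) hle
      (by rw [h0, map_zero]))
  have : (x : Localization (intNonzero R)) = 0 := by
    rw [map_zero] at hs
    rcases mul_eq_zero.mp hs with h' | h'
    · exact h'
    · exact absurd h' hsne
  exact Subtype.ext this
end

section
/- Let R be an integral domain of characteristic zero with binomial closure R^bin and canonical injection ι : R → R^bin, and let S be a binomial ring. Suppose a family of ring homomorphisms {φ_j : R → S}_{j ∈ J} discriminates R, i.e., for every finite subset M ⊆ R there is j ∈ J such that φ_j is injective on M. For each j let φ_j' : R^bin → S be a ring homomorphism with φ_j' ∘ ι = φ_j. Then the family {φ_j'}_{j ∈ J} discriminates R^bin: for every finite subset M ⊆ R^bin there exists j ∈ J such that φ_j' is injective on M. -/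
lemma common_denom (R : Type*) [CommRing R] [IsDomain R] [CharZero R]
    (M : Finset (Localization (intNonzero R))) :
    ∃ c ∈ intNonzero R, ∀ x ∈ M, ∃ r : R,
      x * algebraMap R (Localization (intNonzero R)) c
        = algebraMap R (Localization (intNonzero R)) r := by
  classical
  induction M using Finset.induction_on with
  | empty => exact ⟨1, one_mem _, by simp⟩
  | insert _ _ ha ih =>
    obtain ⟨c, hc, hM⟩ := ih
    rename_i a M
    obtain ⟨⟨r, d⟩, hrd⟩ := IsLocalization.surj (intNonzero R) a
    dsimp only at hrd
    refine ⟨c * d.1, mul_mem hc d.2, fun x hx => ?_⟩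
    rcases Finset.mem_insert.mp hx with rfl | hx
    · exact ⟨r * c, by rw [map_mul, ← mul_assoc, mul_right_comm, hrd, map_mul, mul_comm]⟩
    · obtain ⟨s, hs⟩ := hM x hx
      exact ⟨s * d.1, by rw [map_mul, ← mul_assoc, hs, map_mul]⟩

/-- if a family `{φ_j : R → S}` of ring homomorphisms into a binomial ring `S`
discriminates `R` (for every finite `M ⊆ R` some `φ_j` is injective on `M`), and
`φ_j' : R^bin → S` extends `φ_j` for each `j`, then the family `{φ_j'}` discriminates
`R^bin`. -/
theorem binClosure_discriminated (R S : Type*) [CommRing R] [IsDomain R] [CharZero R]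
    [CommRing S] [IsDomain S] [CharZero S] (hS : IsBinomialRing S)
    {J : Type*} (φ : J → (R →+* S))
    (hdisc : ∀ M : Finset R, ∃ j : J, Set.InjOn (φ j) M)
    (φ' : J → (binClosure R →+* S))
    (hext : ∀ j : J, (φ' j).comp (iotaBin R) = φ j) :
    ∀ M : Finset (binClosure R), ∃ j : J, Set.InjOn (φ' j) M := by
  classical
  intro M
  obtain ⟨c, hc, hM⟩ := common_denom R (M.image (Subtype.val))
  -- for each x ∈ M, pick r with x * ι c = ι r
  have key : ∀ x ∈ M, ∃ r : R, x * iotaBin R c = iotaBin R r := by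
    intro x hx
    obtain ⟨r, hr⟩ := hM x.1 (Finset.mem_image_of_mem _ hx)
    exact ⟨r, Subtype.ext hr⟩
  set g : binClosure R → R := fun x =>
    if h : ∃ r : R, x * iotaBin R c = iotaBin R r then h.choose else 0 with hg
  have hgspec : ∀ x ∈ M, x * iotaBin R c = iotaBin R (g x) := by
    intro x hx
    have h := key x hx
    simp only [hg, dif_pos h]
    exact h.choose_spec
  obtain ⟨j, hj⟩ := hdisc (M.image g)
  refine ⟨j, fun x hx y hy hxy => ?_⟩
  have hx' : x * iotaBin R c = iotaBin R (g x) := hgspec x hx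
  have hy' : y * iotaBin R c = iotaBin R (g y) := hgspec y hy
  have hphi : ∀ z : R, φ' j (iotaBin R z) = φ j z := fun z =>
    RingHom.congr_fun (hext j) z
  have heq : φ j (g x) = φ j (g y) := by
    rw [← hphi, ← hphi, ← hx', ← hy', map_mul, map_mul, hxy]
  have hgxy : g x = g y :=
    hj (Finset.mem_coe.mpr (Finset.mem_image_of_mem g hx))
       (Finset.mem_coe.mpr (Finset.mem_image_of_mem g hy)) heq
  have hmul : x * iotaBin R c = y * iotaBin R c := by rw [hx', hy', hgxy]
  have hu : IsUnit (algebraMap R (Localization (intNonzero R)) c) :=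
    IsLocalization.map_units (Localization (intNonzero R)) ⟨c, hc⟩
  have : (x : Localization (intNonzero R)) * algebraMap R _ c
      = (y : Localization (intNonzero R)) * algebraMap R _ c :=
    congrArg Subtype.val hmul
  exact Subtype.ext (hu.mul_right_cancel this)
end

section
/- Let R be an integral domain of characteristic zero that is discriminated by the ring of p-adic integers ℤ_[p], i.e., for every finite subset M ⊆ R there exists a ring homomorphism R → ℤ_[p] injective on M. Then the binomial closure R^bin of R is also discriminated by ℤ_[p]: for every finite subset M ⊆ R^bin there exists a ring homomorphism R^bin → ℤ_[p] injective on M. -/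
lemma int_fact_dvd (m : ℤ) (n : ℕ) : (n.factorial : ℤ) ∣ ∏ i ∈ Finset.range n, (m - i) := by
  have h : ∏ i ∈ Finset.range n, (m - i) = (descPochhammer ℤ n).eval m := by
    induction n with
    | zero => simp
    | succ k ih => rw [Finset.prod_range_succ, ih, descPochhammer_succ_right]; simp [mul_comm]
  rw [h, Polynomial.eval_eq_smeval, Ring.descPochhammer_eq_factorial_smul_choose]
  exact ⟨Ring.choose m n, by rw [nsmul_eq_mul]⟩

lemma dvd_prod_sub_prod {R : Type*} [CommRing R] (d a b : R) (h : d ∣ a - b) (n : ℕ) :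
    d ∣ ∏ i ∈ Finset.range n, (a - (i : R)) - ∏ i ∈ Finset.range n, (b - (i : R)) := by
  induction n with
  | zero => simp
  | succ k ih =>
    rw [Finset.prod_range_succ, Finset.prod_range_succ]
    have heq : (∏ i ∈ Finset.range k, (a - (i : R))) * (a - k)
        - (∏ i ∈ Finset.range k, (b - (i : R))) * (b - k)
        = ((∏ i ∈ Finset.range k, (a - (i : R))) - ∏ i ∈ Finset.range k, (b - (i : R))) * (a - k)
          + (∏ i ∈ Finset.range k, (b - (i : R))) * (a - b) := by ring
    rw [heq]
    exact dvd_add (ih.mul_right _) (h.mul_left _)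

lemma padic_binom_dvd (p : ℕ) [Fact p.Prime] (z : ℤ_[p]) (n : ℕ) :
    ∃ y : ℤ_[p], (n.factorial : ℤ_[p]) * y = ∏ i ∈ Finset.range n, (z - (i : ℤ_[p])) := by
  set v := (n.factorial).factorization p with hv
  set u := n.factorial / p ^ v with hu
  have hfac : p ^ v * u = n.factorial := Nat.ordProj_mul_ordCompl_eq_self _ p
  have hpu : ¬ p ∣ u := Nat.not_dvd_ordCompl (Fact.out) n.factorial_ne_zero
  have huu : IsUnit ((u : ℤ_[p])) := by
    rw [PadicInt.isUnit_iff]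
    have h1 : ‖((u : ℤ) : ℤ_[p])‖ ≤ 1 := PadicInt.norm_le_one _
    have h2 : ¬ ‖((u : ℤ) : ℤ_[p])‖ < 1 := by
      rw [PadicInt.norm_int_lt_one_iff_dvd]
      exact_mod_cast hpu
    push_cast at h1 h2 ⊢
    linarith
  have hdvd : (n.factorial : ℤ_[p]) ∣ (p : ℤ_[p]) ^ v := by
    obtain ⟨w, hw⟩ := huu.exists_right_inv
    refine ⟨w, Eq.symm ?_⟩
    calc (n.factorial : ℤ_[p]) * w = ((p ^ v * u : ℕ) : ℤ_[p]) * w := by rw [hfac]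
    _ = (p : ℤ_[p]) ^ v * ((u : ℤ_[p]) * w) := by push_cast; ring
    _ = (p : ℤ_[p]) ^ v := by rw [hw, mul_one]
  set m := z.appr v with hm
  have hspec : z - (m : ℤ_[p]) ∈ Ideal.span {(p : ℤ_[p]) ^ v} := PadicInt.appr_spec v z
  have hcongr : (p : ℤ_[p]) ^ v ∣
      (∏ i ∈ Finset.range n, (z - (i : ℤ_[p])) - ∏ i ∈ Finset.range n, ((m : ℤ_[p]) - (i : ℤ_[p]))) := by
    have hd : (p : ℤ_[p]) ^ v ∣ z - (m : ℤ_[p]) := Ideal.mem_span_singleton.mp hspec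
    exact dvd_prod_sub_prod _ _ _ hd n
  have hint : (n.factorial : ℤ_[p]) ∣ ∏ i ∈ Finset.range n, ((m : ℤ_[p]) - (i : ℤ_[p])) := by
    obtain ⟨c, hc⟩ := int_fact_dvd (m : ℤ) n
    refine ⟨(c : ℤ_[p]), ?_⟩
    have := congrArg (fun t : ℤ => (t : ℤ_[p])) hc
    push_cast at this ⊢
    rw [← this]
  have : (n.factorial : ℤ_[p]) ∣ ∏ i ∈ Finset.range n, (z - (i : ℤ_[p])) := by
    have := dvd_add (dvd_trans hdvd hcongr) hint
    simpa using this
  exact this.imp fun y hy => hy.symm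


/-- if an integral domain `R` of characteristic zero is discriminated by the
`p`-adic integers `ℤ_[p]` (for every finite `M ⊆ R` there is a ring homomorphism
`R → ℤ_[p]` injective on `M`), then its binomial closure `R^bin` is also discriminated
by `ℤ_[p]`. -/
theorem binClosure_discriminated_by_padicInt (p : ℕ) [Fact p.Prime]
    (R : Type*) [CommRing R] [IsDomain R] [CharZero R]
    (hdisc : ∀ M : Finset R, ∃ f : R →+* ℤ_[p], Set.InjOn f M) :
    ∀ M : Finset (binClosure R), ∃ g : binClosure R →+* ℤ_[p], Set.InjOn g M := by

  classical
  intro M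
  set L := Localization (intNonzero R) with hL
  have hle : intNonzero R ≤ nonZeroDivisors R := fun s hs =>
    mem_nonZeroDivisors_of_ne_zero hs.2
  have hinj : Function.Injective (algebraMap R L) := IsLocalization.injective L hle
  haveI : IsDomain L := IsLocalization.isDomain_of_le_nonZeroDivisors L hle
  -- choose numerators/denominators for every element of L
  choose numden hnd using fun d : L => IsLocalization.surj (M := intNonzero R) d
  -- the finite set of numerators of differences of elements of M
  set M' : Finset R :=
    insert 0 ((M ×ˢ M).image fun q => (numden ((q.1 : L) - (q.2 : L))).1) with hM'
  obtain ⟨f, hf⟩ := hdisc M'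
  -- lift f to the localization, with values in ℚ_p
  set f' : R →+* ℚ_[p] := (PadicInt.Coe.ringHom).comp f with hf'
  have hunit : ∀ y : intNonzero R, IsUnit (f' y) := by
    rintro ⟨y, ⟨mi, hmi⟩, hy0⟩
    have hmi0 : mi ≠ 0 := by rintro rfl; exact hy0 (by simpa using hmi.symm)
    have : f' y = ((mi : ℚ_[p])) := by
      simp only [hf', RingHom.comp_apply, ← hmi, map_intCast]
    rw [this]
    exact isUnit_iff_ne_zero.mpr (by exact_mod_cast hmi0)
  set fL : L →+* ℚ_[p] := IsLocalization.lift hunit with hfLdef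
  have hfL_eq : ∀ r : R, fL (algebraMap R L r) = f' r := fun r => IsLocalization.lift_eq hunit r
  -- the preimage of ℤ_p is a binomially closed subring containing R
  set B' : Subring L := (PadicInt.subring p).comap fL with hB'
  have hBle : binClosure R ≤ B' := by
    apply sInf_le
    constructor
    · -- binomially closed
      intro x hx n
      have hxz : ‖fL x‖ ≤ 1 := hx
      set z : ℤ_[p] := ⟨fL x, hxz⟩ with hz
      obtain ⟨y, hy⟩ := padic_binom_dvd p z n
      have hfactR : ((n.factorial : R)) ∈ intNonzero R :=
        ⟨⟨(n.factorial : ℤ), by push_cast; ring⟩, Nat.cast_ne_zero.mpr n.factorial_ne_zero⟩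
      have hunitL : IsUnit ((n.factorial : L)) := by
        have he : ((n.factorial : L)) = algebraMap R L ((n.factorial : R)) := by
          rw [map_natCast]
        rw [he]
        exact IsLocalization.map_units L ⟨(n.factorial : R), hfactR⟩
      have h1 : (n.factorial : L) * binom x n = ∏ i ∈ Finset.range n, (x - (i : L)) := by
        rw [binom, ← mul_assoc, mul_comm ((n.factorial : L)), mul_assoc,
          Ring.mul_inverse_cancel _ hunitL, mul_one]
      have h2 : (n.factorial : ℚ_[p]) * fL (binom x n)
          = ∏ i ∈ Finset.range n, (fL x - (i : ℚ_[p])) := by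
        have := congrArg fL h1
        simpa using this
      have h3 : ∏ i ∈ Finset.range n, (fL x - (i : ℚ_[p]))
          = ((∏ i ∈ Finset.range n, (z - (i : ℤ_[p])) : ℤ_[p]) : ℚ_[p]) := by
        have hcast : ((∏ i ∈ Finset.range n, (z - (i : ℤ_[p])) : ℤ_[p]) : ℚ_[p])
            = ∏ i ∈ Finset.range n, (((z - (i : ℤ_[p])) : ℤ_[p]) : ℚ_[p]) :=
          map_prod (PadicInt.Coe.ringHom (p := p)) _ _
        rw [hcast]
        refine Finset.prod_congr rfl fun i _ => ?_
        push_cast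
        rfl
      have h4 : (n.factorial : ℚ_[p]) * fL (binom x n) = (n.factorial : ℚ_[p]) * (y : ℚ_[p]) := by
        rw [h2, h3, ← hy]
        push_cast
        ring
      have h5 : fL (binom x n) = (y : ℚ_[p]) :=
        mul_left_cancel₀ (by exact_mod_cast n.factorial_ne_zero) h4
      show fL (binom x n) ∈ PadicInt.subring p
      rw [h5]
      exact y.2
    · rintro _ ⟨r, rfl⟩
      show fL (algebraMap R L r) ∈ PadicInt.subring p
      rw [hfL_eq]
      exact (f r).2
  -- the restricted homomorphism
  set g : binClosure R →+* ℤ_[p] :=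
    { toFun := fun x => ⟨fL (x : L), hBle x.2⟩
      map_one' := Subtype.ext (by simp)
      map_mul' := fun a b => Subtype.ext (by simp; rfl)
      map_zero' := Subtype.ext (by simp)
      map_add' := fun a b => Subtype.ext (by simp; rfl) } with hg
  refine ⟨g, ?_⟩
  intro x hx y hy hxy
  by_contra hne
  have hval : fL (x : L) = fL (y : L) := congrArg Subtype.val hxy
  have hdne : ((x : L) - (y : L)) ≠ 0 := sub_ne_zero.mpr (fun h => hne (Subtype.ext h))
  set d : L := (x : L) - (y : L) with hd
  have hnd1 := hnd d
  set r : R := (numden d).1 with hr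
  set s : intNonzero R := (numden d).2 with hs
  have hsne : algebraMap R L ((s : R)) ≠ 0 := fun h =>
    s.2.2 (hinj (by rw [h, map_zero]))
  have hr0 : r ≠ 0 := by
    intro h0
    have h1 : d * algebraMap R L ((s : R)) = 0 := by
      rw [hnd1, h0, map_zero]
    rcases mul_eq_zero.mp h1 with h | h
    · exact hdne h
    · exact hsne h
  have hrM : r ∈ M' := by
    rw [hM']
    refine Finset.mem_insert_of_mem (Finset.mem_image.mpr ⟨(x, y), ?_, rfl⟩)
    exact Finset.mem_product.mpr ⟨hx, hy⟩
  have h0M : (0 : R) ∈ M' := by rw [hM']; exact Finset.mem_insert_self 0 _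
  have hfr : f r ≠ 0 := fun h => hr0 (hf hrM h0M (by rw [h, map_zero]))
  have hfLd : fL d = 0 := by rw [hd, map_sub, hval, sub_self]
  have hfr' : f' r = 0 := by
    rw [← hfL_eq r, ← hnd1, map_mul, hfLd, zero_mul]
  apply hfr
  have hco : ((f r : ℤ_[p]) : ℚ_[p]) = 0 := hfr'
  exact (PadicInt.coe_eq_zero (x := f r)).mp hco
end
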